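/- Let S ∈ I₁ ∩ I₂ with d_{G(S)}(s,t) = d_t and distance layers L₁, …, L_{d_t−1}, and let Π = (D₁, …, D_{d_t−1}) be an augmenting set in G(S). Then S ⊕ D₁ ⊕ ⋯ ⊕ D_{d_t−1} is a common independent set of M₁ and M₂. -/

import Mathlib

open Finset

/-- A matroid on a finite ground set `E`, given by its independence predicate. -/
structure FinMatroid (α : Type*) [DecidableEq α] where
  E : Finset α
  Indep : Finset α → Prop
  indep_subset_ground : ∀ ⦃S : Finset α⦄, Indep S → S ⊆ E
  indep_empty : Indep ∅
  indep_mono : ∀ ⦃S T : Finset α⦄, Indep S → T ⊆ S → Indep T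
  indep_exchange : ∀ ⦃S T : Finset α⦄, Indep S → Indep T → S.card < T.card →
    ∃ x ∈ T, x ∉ S ∧ Indep (insert x S)

variable {α : Type*} [DecidableEq α]

/-- The rank of a set `X`: the maximum cardinality of an independent subset of `X`. -/
noncomputable def FinMatroid.rank (M : FinMatroid α) (X : Finset α) : ℕ :=
  sSup {n : ℕ | ∃ S : Finset α, M.Indep S ∧ S ⊆ X ∧ S.card = n}

/-- Exchange-graph edges between ground-set elements, for a common independent set `S`. -/
def ExchangeEdge (M1 M2 : FinMatroid α) (S : Finset α) (u v : α) : Prop :=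
  (u ∈ S ∧ v ∉ S ∧ M1.Indep (insert v (S.erase u))) ∨
  (u ∉ S ∧ v ∈ S ∧ M2.Indep (insert u (S.erase v)))

/-- An augmenting path in the exchange graph `G(S)`, recorded by its list of
interior vertices (the endpoints `s`, `t` are implicit). -/
def IsAugPath (M1 M2 : FinMatroid α) (S : Finset α) (p : List α) : Prop :=
  ∃ h : p ≠ [],
    p.Nodup ∧ (∀ a ∈ p, a ∈ M1.E) ∧
    p.head h ∉ S ∧ M1.Indep (insert (p.head h) S) ∧
    p.getLast h ∉ S ∧ M2.Indep (insert (p.getLast h) S) ∧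
    p.Chain' (ExchangeEdge M1 M2 S)

/-- A walk in `G(S)` starting at (a neighbor of) the source `s`, recorded by its
list of ground-set vertices. -/
def PathTo (M1 M2 : FinMatroid α) (S : Finset α) (p : List α) : Prop :=
  ∃ h : p ≠ [], p.head h ∉ S ∧ M1.Indep (insert (p.head h) S) ∧
    p.Chain' (ExchangeEdge M1 M2 S)

/-- `u` lies in the distance layer `L_l` of `G(S)`, i.e. `d(s,u) = l`. -/
def InLayer (M1 M2 : FinMatroid α) (S : Finset α) (u : α) (l : ℕ) : Prop :=
  (∃ p : List α, PathTo M1 M2 S p ∧ p.getLast? = some u ∧ p.length = l) ∧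
  (∀ p : List α, PathTo M1 M2 S p → p.getLast? = some u → l ≤ p.length)

/-- The interior of an `(s,t)`-walk in `G(S)` (not necessarily simple). -/
def IsAugSeq (M1 M2 : FinMatroid α) (S : Finset α) (p : List α) : Prop :=
  PathTo M1 M2 S p ∧
  ∃ h : p ≠ [], p.getLast h ∉ S ∧ M2.Indep (insert (p.getLast h) S)

/-- `dt` is the `(s,t)`-distance in `G(S)`: the shortest `(s,t)`-walk has
`dt - 1` interior vertices. -/
def IsDistST (M1 M2 : FinMatroid α) (S : Finset α) (dt : ℕ) : Prop :=
  (∃ p : List α, IsAugSeq M1 M2 S p ∧ p.length + 1 = dt) ∧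
  (∀ p : List α, IsAugSeq M1 M2 S p → dt ≤ p.length + 1)

/-- An augmenting set `(D 1, …, D (dt-1))` in `G(S)` (CLSSW, Definition 24). -/
def IsAugmentingSet (M1 M2 : FinMatroid α) (S : Finset α) (dt : ℕ)
    (D : ℕ → Finset α) : Prop :=
  (∀ l, 1 ≤ l → l < dt → ∀ u ∈ D l, InLayer M1 M2 S u l) ∧
  (∀ l l', 1 ≤ l → l < dt → 1 ≤ l' → l' < dt → (D l).card = (D l').card) ∧
  M1.Indep (S ∪ D 1) ∧
  M2.Indep (S ∪ D (dt - 1)) ∧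
  (∀ l, 1 ≤ l → l < dt - 1 → Even l → M1.Indep ((S \ D l) ∪ D (l + 1))) ∧
  (∀ l, 1 ≤ l → l < dt - 1 → Odd l → M2.Indep ((S \ D (l + 1)) ∪ D l))

/-- The union `D 1 ∪ ⋯ ∪ D (dt - 1)` of the layers of an augmenting set. -/
def AugUnion (dt : ℕ) (D : ℕ → Finset α) : Finset α :=
  (Finset.Icc 1 (dt - 1)).biUnion D


namespace FinMatroid

variable {M : FinMatroid α} {X Y A B C J S : Finset α} {x u v : α}

lemma rank_bddAbove (M : FinMatroid α) (X : Finset α) :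
    BddAbove {n : ℕ | ∃ S : Finset α, M.Indep S ∧ S ⊆ X ∧ S.card = n} := by
  refine ⟨X.card, fun n hn => ?_⟩
  obtain ⟨S, _, hs, rfl⟩ := hn
  exact card_le_card hs

lemma exists_rank_witness (M : FinMatroid α) (X : Finset α) :
    ∃ B : Finset α, M.Indep B ∧ B ⊆ X ∧ B.card = M.rank X := by
  have hne : {n : ℕ | ∃ S : Finset α, M.Indep S ∧ S ⊆ X ∧ S.card = n}.Nonempty :=
    ⟨0, ∅, M.indep_empty, empty_subset _, card_empty⟩
  exact Nat.sSup_mem hne (rank_bddAbove M X)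

lemma card_le_rank (hB : M.Indep B) (hBX : B ⊆ X) : B.card ≤ M.rank X :=
  le_csSup (rank_bddAbove M X) ⟨B, hB, hBX, rfl⟩

lemma rank_le_card (M : FinMatroid α) (X : Finset α) : M.rank X ≤ X.card := by
  obtain ⟨B, _, hBX, hc⟩ := exists_rank_witness M X
  exact hc ▸ card_le_card hBX

lemma rank_mono (h : X ⊆ Y) : M.rank X ≤ M.rank Y := by
  obtain ⟨B, hB, hBX, hc⟩ := exists_rank_witness M X
  exact hc ▸ card_le_rank hB (hBX.trans h)

lemma rank_indep (hX : M.Indep X) : M.rank X = X.card :=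
  le_antisymm (rank_le_card M X) (card_le_rank hX Subset.rfl)

lemma indep_of_card_le_rank (h : X.card ≤ M.rank X) : M.Indep X := by
  obtain ⟨B, hB, hBX, hc⟩ := exists_rank_witness M X
  have : B = X := eq_of_subset_of_card_le hBX (by omega)
  exact this ▸ hB

lemma rank_insert_le (M : FinMatroid α) (x : α) (X : Finset α) :
    M.rank (insert x X) ≤ M.rank X + 1 := by
  obtain ⟨B, hB, hBX, hc⟩ := exists_rank_witness M (insert x X)
  have h1 : B.erase x ⊆ X := fun y hy => by
    have := hBX (mem_of_mem_erase hy)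
    rcases mem_insert.mp this with h | h
    · exact absurd h (ne_of_mem_erase hy)
    · exact h
  have := card_le_rank (M.indep_mono hB (erase_subset _ _)) h1
  have h2 : B.card ≤ (B.erase x).card + 1 := by
    have h := Finset.card_erase_eq_ite (a := x) (s := B)
    split_ifs at h <;> omega
  omega

lemma rank_insert_eq_of_not_indep (hX : M.Indep X) (hv : v ∉ X)
    (h : ¬ M.Indep (insert v X)) : M.rank (insert v X) = M.rank X := by
  have h1 : M.rank (insert v X) ≠ (insert v X).card := fun he =>
    h (indep_of_card_le_rank he.ge)
  have h2 := M.rank_le_card (insert v X)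
  have h3 : (insert v X).card = X.card + 1 := card_insert_of_notMem hv
  have h4 := rank_mono (M := M) (subset_insert v X)
  rw [rank_indep hX] at h4 ⊢
  omega

/-- extend an independent subset of `X` to one of full rank -/
lemma exists_basis_superset (hJ : M.Indep J) (hJX : J ⊆ X) :
    ∃ B, J ⊆ B ∧ B ⊆ X ∧ M.Indep B ∧ B.card = M.rank X := by
  have main : ∀ n (J : Finset α), M.Indep J → J ⊆ X → M.rank X - J.card ≤ n →
      ∃ B, J ⊆ B ∧ B ⊆ X ∧ M.Indep B ∧ B.card = M.rank X := by
    intro n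
    induction n with
    | zero =>
      intro J hJ hJX hle
      have := card_le_rank hJ hJX
      exact ⟨J, Subset.rfl, hJX, hJ, by omega⟩
    | succ n ih =>
      intro J hJ hJX hle
      by_cases heq : M.rank X ≤ J.card
      · have := card_le_rank hJ hJX
        exact ⟨J, Subset.rfl, hJX, hJ, by omega⟩
      · obtain ⟨B0, hB0, hB0X, hc0⟩ := exists_rank_witness M X
        have hlt : J.card < B0.card := by omega
        obtain ⟨x, hxB0, hxJ, hind⟩ := M.indep_exchange hJ hB0 hlt
        have hsub : insert x J ⊆ X := insert_subset (hB0X hxB0) hJX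
        have hcard : (insert x J).card = J.card + 1 := card_insert_of_notMem hxJ
        obtain ⟨B, hJB, hBX, hiB, hcB⟩ := ih (insert x J) hind hsub (by omega)
        exact ⟨B, (subset_insert x J).trans hJB, hBX, hiB, hcB⟩
  exact main (M.rank X - J.card) J hJ hJX le_rfl

/-- if `x` is spanned by `A` then it is spanned by any superset. -/
lemma rank_insert_eq_of_subset (h : M.rank (insert x A) = M.rank A) (hAC : A ⊆ C) :
    M.rank (insert x C) = M.rank C := by
  by_cases hxC : x ∈ C
  · rw [insert_eq_self.mpr hxC]
  have hge := rank_mono (M := M) (subset_insert x C)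
  refine le_antisymm ?_ hge
  by_contra hlt
  push_neg at hlt
  -- take a basis J0 of A, extend to basis J of C, extend to basis J' of insert x C
  obtain ⟨J0, hJ0, hJ0A, hc0⟩ := exists_rank_witness M A
  obtain ⟨J, hJ0J, hJC, hJind, hJc⟩ := exists_basis_superset hJ0 (hJ0A.trans hAC)
  obtain ⟨J', hJJ', hJ'sub, hJ'ind, hJ'c⟩ :=
    exists_basis_superset hJind (hJC.trans (subset_insert x C))
  have hJC' : J ⊆ J' ∩ C := subset_inter hJJ' hJC
  have hJ'C : J' ∩ C = J := by
    refine (eq_of_subset_of_card_le hJC' ?_).symm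
    have : M.Indep (J' ∩ C) := M.indep_mono hJ'ind (inter_subset_left)
    have := card_le_rank this (inter_subset_right)
    omega
  have hxJ' : x ∈ J' := by
    by_contra hx
    have : J' ⊆ C := fun y hy => by
      rcases mem_insert.mp (hJ'sub hy) with h | h
      · exact absurd (h ▸ hy) hx
      · exact h
    have heq : J' = J := by rw [← hJ'C]; exact (inter_eq_left.mpr this).symm
    rw [heq] at hJ'c
    omega
  have hxJ0 : x ∉ J0 := fun h => hxC (hAC (hJ0A h))
  have hind : M.Indep (insert x J0) :=
    M.indep_mono hJ'ind (insert_subset hxJ' (hJ0J.trans hJJ'))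
  have hle : (insert x J0).card ≤ M.rank (insert x A) :=
    card_le_rank hind (insert_subset_insert x hJ0A)
  have : (insert x J0).card = J0.card + 1 := card_insert_of_notMem hxJ0
  have := rank_mono (M := M) (subset_insert x A)
  omega

end FinMatroid

namespace FinMatroid

variable {α : Type*} [DecidableEq α]
variable {M : FinMatroid α} {X Y A B C J S Z : Finset α} {x u v : α}

lemma rank_union_eq (h : ∀ x ∈ B, M.rank (insert x A) = M.rank A) :
    M.rank (A ∪ B) = M.rank A := by
  induction B using Finset.induction with
  | empty => rw [union_empty]
  | @insert x B' hx ih =>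
    have h1 : A ∪ insert x B' = insert x (A ∪ B') := by
      ext y; simp only [mem_insert, mem_union]; tauto
    have h2 : M.rank (A ∪ B') = M.rank A := ih fun y hy => h y (mem_insert_of_mem hy)
    rw [h1, rank_insert_eq_of_subset (h x (mem_insert_self x B')) subset_union_left, h2]

/-- circuit-elimination style fact -/
lemma rank_insert_erase (hS : M.Indep S) (hA : A ⊆ S) (hu : u ∈ A) (hv : v ∉ S)
    (h1 : M.rank (insert v A) = M.rank A)
    (h2 : M.rank (insert v (S.erase u)) = M.rank (S.erase u)) :
    M.rank (insert v (A.erase u)) = M.rank (A.erase u) := by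
  have hAind : M.Indep A := M.indep_mono hS hA
  have hAe : M.Indep (A.erase u) := M.indep_mono hAind (erase_subset _ _)
  have hvA : v ∉ A := fun h => hv (hA h)
  have hvAe : v ∉ A.erase u := fun h => hvA (mem_of_mem_erase h)
  by_cases hind : M.Indep (insert v (A.erase u))
  · exfalso
    -- u is spanned by (insert v (A.erase u)), hence by insert v (S.erase u)
    have huv : u ≠ v := fun h => hv (h ▸ hA hu)
    have hset : insert u (insert v (A.erase u)) = insert v A := by
      rw [Finset.insert_comm, insert_erase hu]
    have hrA : M.rank A = A.card := rank_indep hAind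
    have hcAe : (A.erase u).card = A.card - 1 := card_erase_of_mem hu
    have hcard : (insert v (A.erase u)).card = A.card := by
      rw [card_insert_of_notMem hvAe]
      have : 1 ≤ A.card := card_pos.mpr ⟨u, hu⟩
      omega
    have hr1 : M.rank (insert u (insert v (A.erase u))) = M.rank (insert v (A.erase u)) := by
      rw [hset, h1, hrA, rank_indep hind, hcard]
    have hsub : insert v (A.erase u) ⊆ insert v (S.erase u) :=
      insert_subset_insert v (erase_subset_erase u hA)
    have hr2 := rank_insert_eq_of_subset hr1 hsub
    rw [h2] at hr2
    have hSset : insert u (insert v (S.erase u)) = insert v S := by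
      rw [Finset.insert_comm, insert_erase (hA hu)]
    rw [hSset] at hr2
    have hSe : M.rank (S.erase u) = S.card - 1 := by
      rw [rank_indep (M.indep_mono hS (erase_subset _ _)), card_erase_of_mem (hA hu)]
    have hmono : M.rank S ≤ M.rank (insert v S) := rank_mono (subset_insert v S)
    rw [rank_indep hS] at hmono
    have hcS : 1 ≤ S.card := card_pos.mpr ⟨u, hA hu⟩
    omega
  · exact rank_insert_eq_of_not_indep hAe hvAe hind

lemma rank_insert_sdiff (hS : M.Indep S) (hv : v ∉ S) (hZ : Z ⊆ S)
    (hv0 : M.rank (insert v S) = M.rank S)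
    (h : ∀ u ∈ Z, M.rank (insert v (S.erase u)) = M.rank (S.erase u)) :
    M.rank (insert v (S \ Z)) = M.rank (S \ Z) := by
  induction Z using Finset.induction with
  | empty => simpa using hv0
  | @insert u Z' hu ih =>
    have huS : u ∈ S := hZ (mem_insert_self u Z')
    have hZ' : Z' ⊆ S := (subset_insert u Z').trans hZ
    have ih' := ih hZ' fun w hw => h w (mem_insert_of_mem hw)
    have huA : u ∈ S \ Z' := mem_sdiff.mpr ⟨huS, hu⟩
    have hset : (S \ Z').erase u = S \ insert u Z' := by
      ext y
      simp only [mem_erase, mem_sdiff, mem_insert]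
      tauto
    have := rank_insert_erase hS (sdiff_subset) huA hv ih'
      (h u (mem_insert_self u Z'))
    rwa [hset] at this

end FinMatroid

namespace FinMatroid

variable {α : Type*} [DecidableEq α]

lemma biUnion_Icc_right (a b : ℕ) (f : ℕ → Finset α) (h : a ≤ b + 1) :
    (Icc a (b + 1)).biUnion f = (Icc a b).biUnion f ∪ f (b + 1) := by
  ext x
  simp only [mem_biUnion, mem_Icc, mem_union]
  constructor
  · rintro ⟨i, ⟨h1, h2⟩, hx⟩
    rcases Nat.lt_or_ge i (b + 1) with hlt | hge
    · exact Or.inl ⟨i, ⟨h1, by omega⟩, hx⟩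
    · have : i = b + 1 := by omega
      exact Or.inr (this ▸ hx)
  · rintro (⟨i, ⟨h1, h2⟩, hx⟩ | hx)
    · exact ⟨i, ⟨h1, by omega⟩, hx⟩
    · exact ⟨b + 1, ⟨h, le_rfl⟩, hx⟩

lemma biUnion_Icc_left (a b : ℕ) (f : ℕ → Finset α) (h : a ≤ b) :
    (Icc a b).biUnion f = f a ∪ (Icc (a + 1) b).biUnion f := by
  ext x
  simp only [mem_biUnion, mem_Icc, mem_union]
  constructor
  · rintro ⟨i, ⟨h1, h2⟩, hx⟩
    rcases Nat.lt_or_ge a i with hlt | hge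
    · exact Or.inr ⟨i, ⟨by omega, h2⟩, hx⟩
    · have : i = a := by omega
      exact Or.inl (this ▸ hx)
  · rintro (hx | ⟨i, ⟨h1, h2⟩, hx⟩)
    · exact ⟨a, ⟨le_rfl, h⟩, hx⟩
    · exact ⟨i, ⟨by omega, h2⟩, hx⟩

lemma key (M : FinMatroid α) (S : Finset α) (hS : M.Indep S)
    (m : ℕ) (E O : ℕ → Finset α)
    (hES : ∀ i, 1 ≤ i → i ≤ m → E i ⊆ S)
    (hOS : ∀ i, 1 ≤ i → i ≤ m + 1 → ∀ v ∈ O i, v ∉ S)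
    (hEdisj : ∀ i j, 1 ≤ i → i ≤ m → 1 ≤ j → j ≤ m → i ≠ j → Disjoint (E i) (E j))
    (hOdisj : ∀ i j, 1 ≤ i → i ≤ m + 1 → 1 ≤ j → j ≤ m + 1 → i ≠ j → Disjoint (O i) (O j))
    (hcard : ∀ i, 1 ≤ i → i ≤ m → (E i).card = (O (i + 1)).card)
    (hbase : M.Indep (S ∪ O 1))
    (hstep : ∀ i, 1 ≤ i → i ≤ m → M.Indep ((S \ E i) ∪ O (i + 1)))
    (hspan : ∀ i, 2 ≤ i → i ≤ m + 1 → ∀ v ∈ O i, ¬ M.Indep (insert v S))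
    (hsc : ∀ i i', 1 ≤ i' → i' + 2 ≤ i → i ≤ m + 1 → ∀ u ∈ E i', ∀ v ∈ O i,
      ¬ M.Indep (insert v (S.erase u))) :
    M.Indep ((S \ (Icc 1 m).biUnion E) ∪ (Icc 1 (m + 1)).biUnion O) := by
  classical
  set UE : ℕ → Finset α := fun j => (Icc 1 j).biUnion E with hUE
  set UO : ℕ → Finset α := fun j => (Icc 1 j).biUnion O with hUO
  have hUEsub : ∀ j, j ≤ m → UE j ⊆ S := by
    intro j hj x hx
    obtain ⟨i, hi, hx⟩ := mem_biUnion.mp hx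
    rw [mem_Icc] at hi
    exact hES i hi.1 (by omega) hx
  have hUOS : ∀ j, j ≤ m + 1 → ∀ v ∈ UO j, v ∉ S := by
    intro j hj v hv
    obtain ⟨i, hi, hv⟩ := mem_biUnion.mp hv
    rw [mem_Icc] at hi
    exact hOS i hi.1 (by omega) v hv
  -- the "recovery" claim (★)
  have star : ∀ i, 1 ≤ i → i ≤ m → ∀ u ∈ E i, ∀ C : Finset α,
      (S \ UE i) ∪ O (i + 1) ⊆ C → M.rank (insert u C) = M.rank C := by
    intro i hi1 him u hu C hC
    set P := S \ UE (i - 1) with hP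
    have hPS : P ⊆ S := sdiff_subset
    have hPind : M.Indep P := M.indep_mono hS hPS
    -- step 1 : every v ∈ O (i+1) is spanned by P
    have step1 : ∀ v ∈ O (i + 1), M.rank (insert v P) = M.rank P := by
      intro v hv
      have hvS : v ∉ S := hOS (i + 1) (by omega) (by omega) v hv
      have hv0 : M.rank (insert v S) = M.rank S := by
        refine rank_insert_eq_of_not_indep hS hvS ?_
        exact hspan (i + 1) (by omega) (by omega) v hv
      refine rank_insert_sdiff hS hvS (hUEsub (i - 1) (by omega)) hv0 ?_
      intro w hw
      obtain ⟨i', hi', hw⟩ := mem_biUnion.mp hw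
      rw [mem_Icc] at hi'
      have hwS : w ∈ S := hES i' hi'.1 (by omega) hw
      have hne : ¬ M.Indep (insert v (S.erase w)) :=
        hsc (i + 1) i' hi'.1 (by omega) (by omega) w hw v hv
      refine rank_insert_eq_of_not_indep (M.indep_mono hS (erase_subset _ _)) ?_ hne
      exact fun h => hvS (mem_of_mem_erase h)
    -- step 2
    have step2 : M.rank (P ∪ O (i + 1)) = M.rank P := rank_union_eq step1
    -- step 3 : the compensating basis
    set Bi := (P \ E i) ∪ O (i + 1) with hBi
    have hEiP : E i ⊆ P := by
      intro x hx
      refine mem_sdiff.mpr ⟨hES i hi1 him hx, ?_⟩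
      intro hmem
      obtain ⟨i', hi', hx'⟩ := mem_biUnion.mp hmem
      rw [mem_Icc] at hi'
      have : i' ≠ i := by omega
      exact Finset.disjoint_left.mp (hEdisj i' i hi'.1 (by omega) hi1 him this) hx' hx
    have hBisub : Bi ⊆ (S \ E i) ∪ O (i + 1) :=
      union_subset_union (sdiff_subset_sdiff hPS Subset.rfl) Subset.rfl
    have hBiind : M.Indep Bi := M.indep_mono (hstep i hi1 him) hBisub
    have hOP : ∀ v ∈ O (i + 1), v ∉ P := fun v hv h =>
      hOS (i + 1) (by omega) (by omega) v hv (hPS h)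
    have hdisjBi : Disjoint (P \ E i) (O (i + 1)) := by
      rw [disjoint_right]
      exact fun {a} ha h => hOP a ha (mem_sdiff.mp h).1
    have hBicard : Bi.card = P.card := by
      rw [hBi, card_union_of_disjoint hdisjBi, card_sdiff_of_subset hEiP, hcard i hi1 him]
      have : (O (i + 1)).card ≤ P.card := by
        rw [← hcard i hi1 him]
        exact card_le_card hEiP
      have h2 := card_le_card hEiP
      omega
    have hBiPO : Bi ⊆ P ∪ O (i + 1) :=
      union_subset_union sdiff_subset Subset.rfl
    have hrBi : M.rank Bi = P.card := by rw [rank_indep hBiind, hBicard]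
    have hrP : M.rank P = P.card := rank_indep hPind
    -- u is spanned by Bi
    have huP : u ∈ P := hEiP hu
    have hrankins : M.rank (insert u Bi) = M.rank Bi := by
      have hle : M.rank (insert u Bi) ≤ M.rank (P ∪ O (i + 1)) :=
        rank_mono (insert_subset (mem_union_left _ huP) hBiPO)
      have hge : M.rank Bi ≤ M.rank (insert u Bi) := rank_mono (subset_insert u Bi)
      rw [step2, hrP] at hle
      omega
    -- transfer to C
    have hBiC : Bi ⊆ C := by
      refine Subset.trans ?_ hC
      refine union_subset_union ?_ Subset.rfl
      intro x hx
      rw [mem_sdiff] at hx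
      have hxPm := mem_sdiff.mp hx.1
      refine mem_sdiff.mpr ⟨hxPm.1, fun h => ?_⟩
      obtain ⟨i', hi', hx'⟩ := mem_biUnion.mp h
      rw [mem_Icc] at hi'
      rcases Nat.lt_or_ge i' i with hlt | hge
      · exact hxPm.2 (mem_biUnion.mpr ⟨i', mem_Icc.mpr ⟨hi'.1, by omega⟩, hx'⟩)
      · have : i' = i := by omega
        exact hx.2 (this ▸ hx')
    exact rank_insert_eq_of_subset hrankins hBiC
  -- main induction
  have main : ∀ j, j ≤ m → M.Indep ((S \ UE j) ∪ UO (j + 1)) := by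
    intro j
    induction j with
    | zero =>
      intro _
      have h1 : UE 0 = ∅ := by rw [hUE]; simp
      have h2 : UO 1 = O 1 := by rw [hUO]; simp
      rw [h1, h2, sdiff_empty]
      exact hbase
    | succ j ih =>
      intro hj1
      have hX : M.Indep ((S \ UE j) ∪ UO (j + 1)) := ih (by omega)
      set X := (S \ UE j) ∪ UO (j + 1) with hXdef
      set U := (S \ UE (j + 1)) ∪ UO (j + 2) with hUdef
      have claimB : ∀ t, t ≤ j + 1 →
          M.rank (U ∪ (Icc (j + 2 - t) (j + 1)).biUnion E) = M.rank U := by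
        intro t
        induction t with
        | zero =>
          intro _
          have he : Icc (j + 2 - 0) (j + 1) = ∅ := Icc_eq_empty (by omega)
          rw [he, biUnion_empty, union_empty]
        | succ t iht =>
          intro ht
          have hio : j + 2 - (t + 1) = j + 1 - t := by omega
          set i0 := j + 1 - t with hi0
          have hi01 : 1 ≤ i0 := by omega
          have hi0m : i0 ≤ m := by omega
          have hsplit : (Icc i0 (j + 1)).biUnion E = E i0 ∪ (Icc (i0 + 1) (j + 1)).biUnion E :=
            biUnion_Icc_left i0 (j + 1) E (by omega)
          set R := (Icc (i0 + 1) (j + 1)).biUnion E with hR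
          have hUR : U ∪ (Icc i0 (j + 1)).biUnion E = (U ∪ R) ∪ E i0 := by
            rw [hsplit, union_comm (E i0) R, ← union_assoc]
          have hcover : (S \ UE i0) ∪ O (i0 + 1) ⊆ U ∪ R := by
            refine union_subset ?_ ?_
            · intro x hx
              rw [mem_sdiff] at hx
              by_cases hxE : x ∈ UE (j + 1)
              · obtain ⟨i'', hi'', hx''⟩ := mem_biUnion.mp hxE
                rw [mem_Icc] at hi''
                have hge : i0 + 1 ≤ i'' := by
                  by_contra hcon
                  push_neg at hcon
                  exact hx.2 (mem_biUnion.mpr ⟨i'', mem_Icc.mpr ⟨hi''.1, by omega⟩, hx''⟩)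
                exact mem_union_right _ (mem_biUnion.mpr ⟨i'', mem_Icc.mpr ⟨hge, hi''.2⟩, hx''⟩)
              · exact mem_union_left _ (mem_union_left _ (mem_sdiff.mpr ⟨hx.1, hxE⟩))
            · intro v hv
              exact mem_union_left _ (mem_union_right _
                (mem_biUnion.mpr ⟨i0 + 1, mem_Icc.mpr ⟨by omega, by omega⟩, hv⟩))
          have h1 : M.rank ((U ∪ R) ∪ E i0) = M.rank (U ∪ R) :=
            rank_union_eq (fun u hu => star i0 hi01 hi0m u hu (U ∪ R) hcover)
          have h2 := iht (by omega)
          have hidx : j + 2 - t = i0 + 1 := by omega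
          rw [hidx] at h2
          rw [hio, hUR, h1, hR]
          exact h2
      have hfin := claimB (j + 1) le_rfl
      have hidx : j + 2 - (j + 1) = 1 := by omega
      rw [hidx] at hfin
      have hXsub : X ⊆ U ∪ (Icc 1 (j + 1)).biUnion E := by
        refine union_subset ?_ ?_
        · intro x hx
          rw [mem_sdiff] at hx
          by_cases hxE : x ∈ UE (j + 1)
          · exact mem_union_right _ hxE
          · exact mem_union_left _ (mem_union_left _ (mem_sdiff.mpr ⟨hx.1, hxE⟩))
        · intro v hv
          obtain ⟨i', hi', hv'⟩ := mem_biUnion.mp hv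
          rw [mem_Icc] at hi'
          exact mem_union_left _ (mem_union_right _
            (mem_biUnion.mpr ⟨i', mem_Icc.mpr ⟨hi'.1, by omega⟩, hv'⟩))
      have hrUX : X.card ≤ M.rank U := by
        have h1 : M.rank X ≤ M.rank (U ∪ (Icc 1 (j + 1)).biUnion E) := rank_mono hXsub
        rw [hfin, rank_indep hX] at h1
        exact h1
      have hdisjX : Disjoint (S \ UE j) (UO (j + 1)) := by
        rw [disjoint_right]
        exact fun {a} ha h => hUOS (j + 1) (by omega) a ha (mem_sdiff.mp h).1
      have hdisjU : Disjoint (S \ UE (j + 1)) (UO (j + 2)) := by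
        rw [disjoint_right]
        exact fun {a} ha h => hUOS (j + 2) (by omega) a ha (mem_sdiff.mp h).1
      have hUEsucc : UE (j + 1) = UE j ∪ E (j + 1) := biUnion_Icc_right 1 j E (by omega)
      have hUOsucc : UO (j + 2) = UO (j + 1) ∪ O (j + 2) := biUnion_Icc_right 1 (j + 1) O (by omega)
      have hEsub : E (j + 1) ⊆ S \ UE j := by
        intro x hx
        refine mem_sdiff.mpr ⟨hES (j + 1) (by omega) hj1 hx, fun h => ?_⟩
        obtain ⟨i', hi', hx'⟩ := mem_biUnion.mp h
        rw [mem_Icc] at hi'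
        exact disjoint_left.mp
          (hEdisj i' (j + 1) hi'.1 (by omega) (by omega) hj1 (by omega)) hx' hx
      have hSUE : S \ UE (j + 1) = (S \ UE j) \ E (j + 1) := by
        rw [hUEsucc]
        ext y
        simp only [mem_sdiff, mem_union]
        tauto
      have hOdisj2 : Disjoint (UO (j + 1)) (O (j + 2)) := by
        rw [disjoint_left]
        intro a ha hb
        obtain ⟨i', hi', ha'⟩ := mem_biUnion.mp ha
        rw [mem_Icc] at hi'
        exact disjoint_left.mp
          (hOdisj i' (j + 2) hi'.1 (by omega) (by omega) (by omega) (by omega)) ha' hb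
      have hcX : X.card = (S \ UE j).card + (UO (j + 1)).card := card_union_of_disjoint hdisjX
      have hcU : U.card = (S \ UE (j + 1)).card + (UO (j + 2)).card := card_union_of_disjoint hdisjU
      have hc1 : (S \ UE (j + 1)).card = (S \ UE j).card - (E (j + 1)).card := by
        rw [hSUE, card_sdiff_of_subset hEsub]
      have hc1' : (E (j + 1)).card ≤ (S \ UE j).card := card_le_card hEsub
      have hc2 : (UO (j + 2)).card = (UO (j + 1)).card + (O (j + 2)).card := by
        rw [hUOsucc, card_union_of_disjoint hOdisj2]
      have hc3 : (E (j + 1)).card = (O (j + 2)).card := hcard (j + 1) (by omega) hj1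
      exact indep_of_card_le_rank (by omega)
  exact main m le_rfl

end FinMatroid

section Graph

variable {α : Type*} [DecidableEq α] {M1 M2 : FinMatroid α} {S : Finset α}

lemma edge_flip {u v : α} (h : ExchangeEdge M1 M2 S u v) : v ∈ S ↔ ¬ (u ∈ S) := by
  rcases h with ⟨h1, h2, _⟩ | ⟨h1, h2, _⟩ <;> constructor <;> tauto

lemma chain_parity_cons (p : List α) : ∀ (a : α),
    (a :: p).Chain' (ExchangeEdge M1 M2 S) →
    ∀ i (hi : i < (a :: p).length),
      ((a :: p).get ⟨i, hi⟩ ∈ S ↔ ((a ∈ S) ↔ i % 2 = 0)) := by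
  induction p with
  | nil =>
    intro a _ i hi
    have h0 : i = 0 := by simp only [List.length_cons, List.length_nil] at hi; omega
    subst h0
    simp
  | cons b q ih =>
    intro a hch i hi
    rcases List.isChain_cons_cons.mp hch with ⟨hedge, hch'⟩
    match i with
    | 0 => simp
    | Nat.succ i' =>
      have hi' : i' < (b :: q).length := by
        simpa [List.length_cons] using Nat.lt_of_succ_lt_succ hi
      have hget : (a :: b :: q).get ⟨i' + 1, hi⟩ = (b :: q).get ⟨i', hi'⟩ := rfl
      rw [hget, ih b hch' i' hi']
      have hflip := edge_flip hedge
      have h2 : (i' + 1) % 2 = 0 ↔ ¬ (i' % 2 = 0) := by omega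
      rw [hflip, h2]
      tauto

lemma chain_parity (p : List α) (hne : p ≠ [])
    (hch : p.Chain' (ExchangeEdge M1 M2 S)) (i : ℕ) (hi : i < p.length) :
    (p.get ⟨i, hi⟩ ∈ S ↔ ((p.head hne ∈ S) ↔ i % 2 = 0)) := by
  obtain ⟨a, q, rfl⟩ := List.exists_cons_of_ne_nil hne
  exact chain_parity_cons q a hch i hi

end Graph

section Graph2

variable {α : Type*} [DecidableEq α] {M1 M2 : FinMatroid α} {S : Finset α}

lemma layer_unique {u : α} {l l' : ℕ} (h : InLayer M1 M2 S u l)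
    (h' : InLayer M1 M2 S u l') : l = l' := by
  obtain ⟨⟨p, hp, hlast, hlen⟩, hmin⟩ := h
  obtain ⟨⟨p', hp', hlast', hlen'⟩, hmin'⟩ := h'
  have h1 := hmin p' hp' hlast'
  have h2 := hmin' p hp hlast
  omega

lemma layer_mem {u : α} {l : ℕ} (h : InLayer M1 M2 S u l) (hl : 1 ≤ l) :
    u ∈ S ↔ l % 2 = 0 := by
  obtain ⟨⟨p, ⟨hne, hhead, hind, hch⟩, hlast, hlen⟩, hmin⟩ := h
  have hlen0 : p.length ≠ 0 := fun h0 => hne (List.length_eq_zero_iff.mp h0)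
  have hlt : p.length - 1 < p.length := by omega
  have hget := chain_parity p hne hch (p.length - 1) hlt
  have hgl : p.getLast hne = p.get ⟨p.length - 1, hlt⟩ := List.getLast_eq_getElem hne
  have hu : p.getLast hne = u := by
    have h2 := List.getLast?_eq_getLast hne
    rw [h2] at hlast
    exact Option.some_injective _ hlast
  rw [← hgl, hu] at hget
  rw [hget]
  have hh : (p.head hne ∈ S) = False := eq_false hhead
  rw [hh, false_iff]
  omega

lemma layer_le_one {v : α} {l : ℕ} (h : InLayer M1 M2 S v l) (hv : v ∉ S)
    (hind : M1.Indep (insert v S)) : l ≤ 1 := by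
  have hpath : PathTo M1 M2 S [v] := by
    refine ⟨List.cons_ne_nil v [], ?_, ?_, List.isChain_singleton v⟩
    · simpa using hv
    · simpa using hind
  have := h.2 [v] hpath (by simp)
  simpa using this

lemma edge_dist {u v : α} {l l' : ℕ} (hu : InLayer M1 M2 S u l')
    (hv : InLayer M1 M2 S v l) (he : ExchangeEdge M1 M2 S u v) : l ≤ l' + 1 := by
  obtain ⟨⟨p, ⟨hne, hhead, hind, hch⟩, hlast, hlen⟩, _⟩ := hu
  obtain ⟨a, q, rfl⟩ := List.exists_cons_of_ne_nil hne
  have hu' : (a :: q).getLast hne = u := by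
    have h2 := List.getLast?_eq_getLast hne
    rw [h2] at hlast
    exact Option.some_injective _ hlast
  have hpath : PathTo M1 M2 S ((a :: q) ++ [v]) := by
    refine ⟨by simp, ?_, ?_, ?_⟩
    · simpa using hhead
    · simpa using hind
    · refine List.isChain_append.mpr ⟨hch, List.isChain_singleton v, ?_⟩
      intro x hx y hy
      rw [List.getLast?_eq_getLast hne, hu'] at hx
      simp only [Option.mem_def, Option.some_inj] at hx
      simp only [List.head?_cons, Option.mem_def, Option.some_inj] at hy
      subst hx
      subst hy
      exact he
  have hlast2 : ((a :: q) ++ [v]).getLast? = some v := List.getLast?_concat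
  have := hv.2 _ hpath hlast2
  simp only [List.length_append, List.length_cons, List.length_singleton, List.length_nil] at this ⊢
  simp only [List.length_cons] at hlen
  omega

lemma dist_le_layer {v : α} {l dt : ℕ} (hdt : IsDistST M1 M2 S dt)
    (h : InLayer M1 M2 S v l) (hv : v ∉ S) (hind : M2.Indep (insert v S)) :
    dt ≤ l + 1 := by
  obtain ⟨⟨p, hp, hlast, hlen⟩, _⟩ := h
  have hne := hp.choose
  have hu' : p.getLast hne = v := by
    have h2 := List.getLast?_eq_getLast hne
    rw [h2] at hlast
    exact Option.some_injective _ hlast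
  have hseq : IsAugSeq M1 M2 S p := by
    refine ⟨hp, hne, ?_, ?_⟩
    · rw [hu']; exact hv
    · rw [hu']; exact hind
  have := hdt.2 p hseq
  omega

lemma dist_even {dt : ℕ} (hdt : IsDistST M1 M2 S dt) : dt % 2 = 0 ∧ 2 ≤ dt := by
  obtain ⟨⟨p, ⟨⟨hne, hhead, hind, hch⟩, hne2, hlastS, hlasti⟩, hlen⟩, _⟩ := hdt
  have hlen0 : p.length ≠ 0 := fun h0 => hne (List.length_eq_zero_iff.mp h0)
  have hlt : p.length - 1 < p.length := by omega
  have hget := chain_parity p hne hch (p.length - 1) hlt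
  have hgl : p.getLast hne = p.get ⟨p.length - 1, hlt⟩ := List.getLast_eq_getElem hne
  rw [← hgl] at hget
  have h1 : (p.getLast hne ∈ S) = False := eq_false (by
    have : p.getLast hne2 = p.getLast hne := rfl
    rw [← this]; exact hlastS)
  have h2 : (p.head hne ∈ S) = False := eq_false hhead
  rw [h1, h2, false_iff, false_iff] at hget
  omega

end Graph2


/-- Augmenting along an augmenting set yields a common independent set
(CLSSW, Theorem 25). -/
theorem aug_set_independent (M1 M2 : FinMatroid α) (hE : M1.E = M2.E)
    (S : Finset α) (hS1 : M1.Indep S) (hS2 : M2.Indep S)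
    (dt : ℕ) (hdt : IsDistST M1 M2 S dt)
    (D : ℕ → Finset α) (hD : IsAugmentingSet M1 M2 S dt D) :
    M1.Indep (symmDiff S (AugUnion dt D)) ∧
      M2.Indep (symmDiff S (AugUnion dt D)) := by

  classical
  obtain ⟨hlayer, hcards, hbase1, hbase2, heven, hodd⟩ := hD
  obtain ⟨hdt2, hdt22⟩ := dist_even hdt
  set m := dt / 2 - 1 with hm
  have hmdt : dt = 2 * m + 2 := by omega
  have hmemD : ∀ l, 1 ≤ l → l < dt → ∀ x ∈ D l, (x ∈ S ↔ l % 2 = 0) :=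
    fun l h1 h2 x hx => layer_mem (hlayer l h1 h2 x hx) h1
  have hdisjD : ∀ l l', 1 ≤ l → l < dt → 1 ≤ l' → l' < dt → l ≠ l' →
      ∀ x, x ∈ D l → x ∈ D l' → False := by
    intro l l' h1 h2 h3 h4 hne x hx hx'
    exact hne (layer_unique (hlayer l h1 h2 x hx) (hlayer l' h3 h4 x hx'))
  -- M1 side
  have hM1 : M1.Indep ((S \ (Icc 1 m).biUnion (fun i => D (2 * i))) ∪
      (Icc 1 (m + 1)).biUnion (fun i => D (2 * i - 1))) := by
    refine FinMatroid.key M1 S hS1 m (fun i => D (2 * i)) (fun i => D (2 * i - 1))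
      ?_ ?_ ?_ ?_ ?_ ?_ ?_ ?_ ?_
    · intro i h1 h2 x hx
      exact (hmemD (2 * i) (by omega) (by omega) x hx).mpr (by omega)
    · intro i h1 h2 v hv hvS
      have := (hmemD (2 * i - 1) (by omega) (by omega) v hv).mp hvS
      omega
    · intro i j h1 h2 h3 h4 hne
      exact Finset.disjoint_left.mpr fun {x} hx hx' =>
        hdisjD (2 * i) (2 * j) (by omega) (by omega) (by omega) (by omega)
          (by omega) x hx hx'
    · intro i j h1 h2 h3 h4 hne
      exact Finset.disjoint_left.mpr fun {x} hx hx' =>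
        hdisjD (2 * i - 1) (2 * j - 1) (by omega) (by omega) (by omega) (by omega)
          (by omega) x hx hx'
    · intro i h1 h2
      have e : 2 * (i + 1) - 1 = 2 * i + 1 := by omega
      show (D (2 * i)).card = (D (2 * (i + 1) - 1)).card
      rw [e]
      exact hcards (2 * i) (2 * i + 1) (by omega) (by omega) (by omega) (by omega)
    · show M1.Indep (S ∪ D (2 * 1 - 1))
      rw [show (2 * 1 - 1 : ℕ) = 1 by norm_num]
      exact hbase1
    · intro i h1 h2
      show M1.Indep ((S \ D (2 * i)) ∪ D (2 * (i + 1) - 1))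
      rw [show 2 * (i + 1) - 1 = 2 * i + 1 by omega]
      exact heven (2 * i) (by omega) (by omega) ⟨i, by omega⟩
    · intro i h1 h2 v hv hind
      have hvS : v ∉ S := fun hS => by
        have := (hmemD (2 * i - 1) (by omega) (by omega) v hv).mp hS
        omega
      have := layer_le_one (hlayer (2 * i - 1) (by omega) (by omega) v hv) hvS hind
      omega
    · intro i i' h1' h2' h3' u hu v hv hind
      have huS : u ∈ S := (hmemD (2 * i') (by omega) (by omega) u hu).mpr (by omega)
      have hvS : v ∉ S := fun hS => by
        have := (hmemD (2 * i - 1) (by omega) (by omega) v hv).mp hS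
        omega
      have hedge : ExchangeEdge M1 M2 S u v := Or.inl ⟨huS, hvS, hind⟩
      have := edge_dist (hlayer (2 * i') (by omega) (by omega) u hu)
        (hlayer (2 * i - 1) (by omega) (by omega) v hv) hedge
      omega
  -- M2 side
  have hM2 : M2.Indep ((S \ (Icc 1 m).biUnion (fun i => D (2 * (m + 1 - i)))) ∪
      (Icc 1 (m + 1)).biUnion (fun i => D (2 * (m + 1 - i) + 1))) := by
    refine FinMatroid.key M2 S hS2 m (fun i => D (2 * (m + 1 - i)))
      (fun i => D (2 * (m + 1 - i) + 1)) ?_ ?_ ?_ ?_ ?_ ?_ ?_ ?_ ?_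
    · intro i h1 h2 x hx
      exact (hmemD (2 * (m + 1 - i)) (by omega) (by omega) x hx).mpr (by omega)
    · intro i h1 h2 v hv hvS
      have := (hmemD (2 * (m + 1 - i) + 1) (by omega) (by omega) v hv).mp hvS
      omega
    · intro i j h1 h2 h3 h4 hne
      exact Finset.disjoint_left.mpr fun {x} hx hx' =>
        hdisjD (2 * (m + 1 - i)) (2 * (m + 1 - j)) (by omega) (by omega) (by omega)
          (by omega) (by omega) x hx hx'
    · intro i j h1 h2 h3 h4 hne
      exact Finset.disjoint_left.mpr fun {x} hx hx' =>
        hdisjD (2 * (m + 1 - i) + 1) (2 * (m + 1 - j) + 1) (by omega) (by omega)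
          (by omega) (by omega) (by omega) x hx hx'
    · intro i h1 h2
      show (D (2 * (m + 1 - i))).card = (D (2 * (m + 1 - (i + 1)) + 1)).card
      exact hcards (2 * (m + 1 - i)) (2 * (m + 1 - (i + 1)) + 1) (by omega) (by omega)
        (by omega) (by omega)
    · show M2.Indep (S ∪ D (2 * (m + 1 - 1) + 1))
      rw [show 2 * (m + 1 - 1) + 1 = dt - 1 by omega]
      exact hbase2
    · intro i h1 h2
      show M2.Indep ((S \ D (2 * (m + 1 - i))) ∪ D (2 * (m + 1 - (i + 1)) + 1))
      rw [show 2 * (m + 1 - i) = (2 * (m - i) + 1) + 1 by omega,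
        show 2 * (m + 1 - (i + 1)) + 1 = 2 * (m - i) + 1 by omega]
      exact hodd (2 * (m - i) + 1) (by omega) (by omega) ⟨m - i, by omega⟩
    · intro i h1 h2 v hv hind
      have hvS : v ∉ S := fun hS => by
        have := (hmemD (2 * (m + 1 - i) + 1) (by omega) (by omega) v hv).mp hS
        omega
      have := dist_le_layer hdt (hlayer (2 * (m + 1 - i) + 1) (by omega) (by omega) v hv)
        hvS hind
      omega
    · intro i i' h1' h2' h3' u hu v hv hind
      have huS : u ∈ S :=
        (hmemD (2 * (m + 1 - i')) (by omega) (by omega) u hu).mpr (by omega)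
      have hvS : v ∉ S := fun hS => by
        have := (hmemD (2 * (m + 1 - i) + 1) (by omega) (by omega) v hv).mp hS
        omega
      have hedge : ExchangeEdge M1 M2 S v u := Or.inr ⟨hvS, huS, hind⟩
      have := edge_dist (hlayer (2 * (m + 1 - i) + 1) (by omega) (by omega) v hv)
        (hlayer (2 * (m + 1 - i')) (by omega) (by omega) u hu) hedge
      omega
  -- set equalities
  have hAU : AugUnion dt D = (Icc 1 (dt - 1)).biUnion D := rfl
  have hsplitAU : ∀ x, x ∈ AugUnion dt D ↔
      ((∃ i, 1 ≤ i ∧ i ≤ m ∧ x ∈ D (2 * i)) ∨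
        (∃ i, 1 ≤ i ∧ i ≤ m + 1 ∧ x ∈ D (2 * i - 1))) := by
    intro x
    rw [hAU]
    constructor
    · intro h
      obtain ⟨l, hl, hx⟩ := mem_biUnion.mp h
      rw [mem_Icc] at hl
      by_cases hp : l % 2 = 0
      · exact Or.inl ⟨l / 2, by omega, by omega,
          by rw [show 2 * (l / 2) = l by omega]; exact hx⟩
      · exact Or.inr ⟨(l + 1) / 2, by omega, by omega,
          by rw [show 2 * ((l + 1) / 2) - 1 = l by omega]; exact hx⟩
    · rintro (⟨i, h1, h2, hx⟩ | ⟨i, h1, h2, hx⟩)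
      · exact mem_biUnion.mpr ⟨2 * i, mem_Icc.mpr ⟨by omega, by omega⟩, hx⟩
      · exact mem_biUnion.mpr ⟨2 * i - 1, mem_Icc.mpr ⟨by omega, by omega⟩, hx⟩
  have hEq1 : symmDiff S (AugUnion dt D) =
      (S \ (Icc 1 m).biUnion (fun i => D (2 * i))) ∪
        (Icc 1 (m + 1)).biUnion (fun i => D (2 * i - 1)) := by
    ext x
    rw [Finset.mem_symmDiff]
    constructor
    · rintro (⟨hxS, hxA⟩ | ⟨hxA, hxS⟩)
      · refine mem_union_left _ (mem_sdiff.mpr ⟨hxS, fun h => ?_⟩)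
        obtain ⟨i, hi, hx⟩ := mem_biUnion.mp h
        rw [mem_Icc] at hi
        exact hxA ((hsplitAU x).mpr (Or.inl ⟨i, hi.1, hi.2, hx⟩))
      · rcases (hsplitAU x).mp hxA with ⟨i, h1, h2, hx⟩ | ⟨i, h1, h2, hx⟩
        · exact absurd ((hmemD (2 * i) (by omega) (by omega) x hx).mpr (by omega)) hxS
        · exact mem_union_right _ (mem_biUnion.mpr ⟨i, mem_Icc.mpr ⟨h1, h2⟩, hx⟩)
    · intro hx
      rcases mem_union.mp hx with h | h
      · have h' := mem_sdiff.mp h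
        refine Or.inl ⟨h'.1, fun hA => ?_⟩
        rcases (hsplitAU x).mp hA with ⟨i, h1, h2, hx2⟩ | ⟨i, h1, h2, hx2⟩
        · exact h'.2 (mem_biUnion.mpr ⟨i, mem_Icc.mpr ⟨h1, h2⟩, hx2⟩)
        · have := (hmemD (2 * i - 1) (by omega) (by omega) x hx2).mp h'.1
          omega
      · obtain ⟨i, hi, hx2⟩ := mem_biUnion.mp h
        rw [mem_Icc] at hi
        have hxS : x ∉ S := fun hS => by
          have := (hmemD (2 * i - 1) (by omega) (by omega) x hx2).mp hS
          omega
        exact Or.inr ⟨(hsplitAU x).mpr (Or.inr ⟨i, hi.1, hi.2, hx2⟩), hxS⟩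
  have hEqE : (Icc 1 m).biUnion (fun i => D (2 * (m + 1 - i))) =
      (Icc 1 m).biUnion (fun i => D (2 * i)) := by
    ext x
    simp only [mem_biUnion, mem_Icc]
    constructor
    · rintro ⟨i, ⟨h1, h2⟩, hx⟩
      exact ⟨m + 1 - i, ⟨by omega, by omega⟩,
        by rw [show 2 * (m + 1 - i) = 2 * (m + 1 - i) from rfl]; exact hx⟩
    · rintro ⟨i, ⟨h1, h2⟩, hx⟩
      exact ⟨m + 1 - i, ⟨by omega, by omega⟩,
        by rw [show 2 * (m + 1 - (m + 1 - i)) = 2 * i by omega]; exact hx⟩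
  have hEqO : (Icc 1 (m + 1)).biUnion (fun i => D (2 * (m + 1 - i) + 1)) =
      (Icc 1 (m + 1)).biUnion (fun i => D (2 * i - 1)) := by
    ext x
    simp only [mem_biUnion, mem_Icc]
    constructor
    · rintro ⟨i, ⟨h1, h2⟩, hx⟩
      exact ⟨m + 2 - i, ⟨by omega, by omega⟩,
        by rw [show 2 * (m + 2 - i) - 1 = 2 * (m + 1 - i) + 1 by omega]; exact hx⟩
    · rintro ⟨i, ⟨h1, h2⟩, hx⟩
      exact ⟨m + 2 - i, ⟨by omega, by omega⟩,
        by rw [show 2 * (m + 1 - (m + 2 - i)) + 1 = 2 * i - 1 by omega]; exact hx⟩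
  rw [hEqE, hEqO] at hM2
  rw [hEq1]
  exact ⟨hM1, hM2⟩
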